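/- Let M ∈ ℂ^{n×n} be Hermitian positive semidefinite, E ∈ ℂ^{p×n} arbitrary, and S ∈ ℂ^{m×n} satisfy SᴴS = τ I_n for some real τ > 0. Let c > 0 and σ > 0 be real. Then the matrices c² S M Sᴴ + σ² I_m and M + (σ²/(τ c²)) I_n are invertible, and c² E Sᴴ (c² S M Sᴴ + σ² I_m)⁻¹ S Eᴴ = E (M + (σ²/(τ c²)) I_n)⁻¹ Eᴴ. -/

import Mathlib

open Matrix ComplexOrder

/-- Core matrix identity of Lemma 1: for `M ⪰ 0`, `SᴴS = τ I`, `c, σ, τ > 0`,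
`c² E Sᴴ (c² S M Sᴴ + σ² I)⁻¹ S Eᴴ = E (M + σ²/(τ c²) I)⁻¹ Eᴴ`, and both
inverted matrices are invertible. -/
theorem pilot_covariance_identity
    {n p m : ℕ} (M : Matrix (Fin n) (Fin n) ℂ) (hM : M.PosSemidef)
    (E : Matrix (Fin p) (Fin n) ℂ) (S : Matrix (Fin m) (Fin n) ℂ)
    (τ : ℝ) (hτ : 0 < τ) (hS : S.conjTranspose * S = (τ : ℂ) • 1)
    (c : ℝ) (hc : 0 < c) (σ : ℝ) (hσ : 0 < σ) :
    IsUnit (((c : ℂ) ^ 2) • (S * M * S.conjTranspose) + ((σ : ℂ) ^ 2) • 1) ∧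
    IsUnit (M + ((σ ^ 2 / (τ * c ^ 2) : ℝ) : ℂ) • 1) ∧
    ((c : ℂ) ^ 2) • (E * S.conjTranspose *
        (((c : ℂ) ^ 2) • (S * M * S.conjTranspose) + ((σ : ℂ) ^ 2) • 1)⁻¹ *
        S * E.conjTranspose)
      = E * (M + ((σ ^ 2 / (τ * c ^ 2) : ℝ) : ℂ) • 1)⁻¹ * E.conjTranspose := by
  set r : ℝ := σ ^ 2 / (τ * c ^ 2) with hr
  have hrpos : 0 < r := div_pos (pow_pos hσ 2) (mul_pos hτ (pow_pos hc 2))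
  set A : Matrix (Fin m) (Fin m) ℂ :=
    ((c : ℂ) ^ 2) • (S * M * S.conjTranspose) + ((σ : ℂ) ^ 2) • 1 with hA
  set B : Matrix (Fin n) (Fin n) ℂ := M + ((r : ℝ) : ℂ) • 1 with hB
  -- σ² • 1 is PosDef
  have hσ1 : (((σ : ℂ) ^ 2) • (1 : Matrix (Fin m) (Fin m) ℂ)).PosDef := by
    rw [smul_one_eq_diagonal]
    refine posDef_diagonal_iff.mpr fun i => ?_
    rw [← Complex.ofReal_pow]
    exact_mod_cast pow_pos hσ 2
  have hr1 : ((((r : ℝ) : ℂ)) • (1 : Matrix (Fin n) (Fin n) ℂ)).PosDef := by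
    rw [smul_one_eq_diagonal]
    exact posDef_diagonal_iff.mpr fun i => by exact_mod_cast hrpos
  -- c² • (S M Sᴴ) is PosSemidef
  have hc2 : ((c : ℂ) ^ 2) • (S * M * S.conjTranspose)
      = ((c : ℂ) • S) * M * ((c : ℂ) • S).conjTranspose := by
    rw [conjTranspose_smul, Matrix.smul_mul, Matrix.smul_mul, Matrix.mul_smul, smul_smul,
      Complex.star_def, Complex.conj_ofReal, sq]
  have hSMS : (((c : ℂ) ^ 2) • (S * M * S.conjTranspose)).PosSemidef := by
    rw [hc2]; exact hM.mul_mul_conjTranspose_same _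
  have hApd : A.PosDef := Matrix.PosDef.posSemidef_add hSMS hσ1
  have hBpd : B.PosDef := Matrix.PosDef.posSemidef_add hM hr1
  have hAunit : IsUnit A := hApd.isUnit
  have hBunit : IsUnit B := hBpd.isUnit
  refine ⟨hAunit, hBunit, ?_⟩
  have hAinv : A * A⁻¹ = 1 := mul_nonsing_inv _ ((isUnit_iff_isUnit_det A).mp hAunit)
  have hBinv : B⁻¹ * B = 1 := nonsing_inv_mul _ ((isUnit_iff_isUnit_det B).mp hBunit)
  have hτc : ((r : ℝ) : ℂ) * ((τ : ℂ) * (c : ℂ) ^ 2) = (σ : ℂ) ^ 2 := by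
    rw [hr]
    push_cast
    field_simp
  have h1 : S.conjTranspose * (S * M * S.conjTranspose)
      = (τ : ℂ) • (M * S.conjTranspose) := by
    rw [← Matrix.mul_assoc, ← Matrix.mul_assoc, hS, Matrix.smul_mul, Matrix.smul_mul,
      Matrix.one_mul]
  -- key: Sᴴ * A = (τ c²) • (B * Sᴴ)
  have hkey : S.conjTranspose * A = ((τ : ℂ) * (c : ℂ) ^ 2) • (B * S.conjTranspose) := by
    rw [hA, hB, Matrix.mul_add, Matrix.mul_smul, Matrix.mul_smul, Matrix.mul_one, h1,
      smul_smul, Matrix.add_mul, Matrix.smul_mul, Matrix.one_mul, smul_add, smul_smul,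
      ← hτc]
    congr 1
    · rw [mul_comm]
    · rw [mul_comm]
  -- hence B⁻¹ * Sᴴ = (τ c²) • (Sᴴ * A⁻¹)
  have hkey2 : B⁻¹ * S.conjTranspose = ((τ : ℂ) * (c : ℂ) ^ 2) • (S.conjTranspose * A⁻¹) := by
    have h1 : S.conjTranspose * A * A⁻¹ = ((τ : ℂ) * (c : ℂ) ^ 2) • (B * (S.conjTranspose * A⁻¹)) := by
      rw [hkey, Matrix.smul_mul, Matrix.mul_assoc]
    rw [Matrix.mul_assoc, hAinv, Matrix.mul_one] at h1
    calc B⁻¹ * S.conjTranspose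
        = B⁻¹ * (((τ : ℂ) * (c : ℂ) ^ 2) • (B * (S.conjTranspose * A⁻¹))) := by rw [← h1]
      _ = ((τ : ℂ) * (c : ℂ) ^ 2) • (B⁻¹ * B * (S.conjTranspose * A⁻¹)) := by
          rw [Matrix.mul_smul, Matrix.mul_assoc]
      _ = ((τ : ℂ) * (c : ℂ) ^ 2) • (S.conjTranspose * A⁻¹) := by
          rw [hBinv, Matrix.one_mul]
  -- c² • (Sᴴ A⁻¹ S) = B⁻¹
  have hmain : ((c : ℂ) ^ 2) • (S.conjTranspose * A⁻¹ * S) = B⁻¹ := by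
    have hτne : (τ : ℂ) ≠ 0 := by exact_mod_cast hτ.ne'
    have hcne : ((c : ℂ) ^ 2) ≠ 0 := by
      exact_mod_cast pow_ne_zero 2 (by exact_mod_cast hc.ne' : (c:ℂ) ≠ 0)
    have h2 : B⁻¹ * (S.conjTranspose * S)
        = ((τ : ℂ) * (c : ℂ) ^ 2) • (S.conjTranspose * A⁻¹ * S) := by
      rw [← Matrix.mul_assoc, hkey2, Matrix.smul_mul]
    rw [hS, Matrix.mul_smul, Matrix.mul_one] at h2
    have h3 : (S.conjTranspose * A⁻¹ * S)
        = ((τ : ℂ) * (c : ℂ) ^ 2)⁻¹ • ((τ : ℂ) • B⁻¹) := by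
      rw [h2, smul_smul, inv_mul_cancel₀ (mul_ne_zero hτne hcne), one_smul]
    rw [h3, smul_smul, smul_smul]
    rw [show ((c : ℂ) ^ 2) * ((τ : ℂ) * (c : ℂ) ^ 2)⁻¹ * (τ : ℂ) = 1 by
      field_simp]
    rw [one_smul]
  calc ((c : ℂ) ^ 2) • (E * S.conjTranspose * A⁻¹ * S * E.conjTranspose)
      = E * (((c : ℂ) ^ 2) • (S.conjTranspose * A⁻¹ * S)) * E.conjTranspose := by
        rw [Matrix.mul_smul, Matrix.smul_mul]
        congr 1
        simp only [Matrix.mul_assoc]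
    _ = E * B⁻¹ * E.conjTranspose := by rw [hmain]
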